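/- Let (X, d) be a strong pseudo k-metric space and let x_1,…,x_k ∈ X. Then there exists a pair (X, d′) ∈ C_{k,∞}^1 (a coboundary k-metric in 1 dimension) such that (1) d′(y_1,…,y_k) ≤ d(y_1,…,y_k) for all y_1,…,y_k ∈ X (non-expansion), and (2) d′(x_1,…,x_k) = d(x_1,…,x_k) (one-tuple distance preservation). -/

import Mathlib

open scoped BigOperators

/-- An alternating real-valued function on `j`-tuples of `X`
(a `(j-1)`-dimensional chain on the complete complex on `X`). -/
def AltChain {X : Type*} {j : ℕ} (α : (Fin j → X) → ℝ) : Prop :=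
  ∀ (π : Equiv.Perm (Fin j)) (x : Fin j → X),
    α (x ∘ π) = ((Equiv.Perm.sign π : ℤ) : ℝ) * α x

/-- The boundary operator: `(∂α)(y₁,…,y_j) = ∑_{x ∈ X} α(x, y₁, …, y_j)`. -/
noncomputable def bdry {X : Type*} [Fintype X] {j : ℕ}
    (α : (Fin (j + 1) → X) → ℝ) : (Fin j → X) → ℝ :=
  fun y => ∑ x : X, α (Fin.cons x y)

/-- The elementary chain `1_t`: value `sign π` on the reordering of `t` by `π`,
and `0` on all other tuples. -/
noncomputable def unitChain {X : Type*} [DecidableEq X] {j : ℕ} (t : Fin j → X) :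
    (Fin j → X) → ℝ :=
  fun s => ∑ π : Equiv.Perm (Fin j),
    if s = t ∘ π then ((Equiv.Perm.sign π : ℤ) : ℝ) else 0

/-- The coboundary operator:
`(δf)(x₁,…,x_{j+2}) = ∑ᵢ (-1)^(i+1) f(x₁,…,x̂ᵢ,…,x_{j+2})` (`0`-indexed sign `(-1)^i`). -/
noncomputable def cobdry {X : Type*} {j : ℕ}
    (f : (Fin (j + 1) → X) → ℝ) : (Fin (j + 2) → X) → ℝ :=
  fun x => ∑ i : Fin (j + 2), (-1 : ℝ) ^ (i : ℕ) * f (x ∘ i.succAbove)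

/-- A pseudo metric of arity `K` (a pseudo `K`-metric): nonnegative, vanishing on
non-injective tuples, permutation invariant, satisfying the simplex inequality. -/
structure IsPseudoMetric {X : Type*} (K : ℕ) (d : (Fin K → X) → ℝ) : Prop where
  nonneg : ∀ x, 0 ≤ d x
  eq_zero : ∀ x, ¬ Function.Injective x → d x = 0
  perm : ∀ (π : Equiv.Perm (Fin K)) (x), d (x ∘ π) = d x
  simplex : ∀ (x : Fin K → X) (y : X),
    d x ≤ ∑ i : Fin K, d (Function.update x i y)

/-- A strong pseudo metric of arity `k + 1` (a strong pseudo `(k+1)`-metric).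
The strong simplex inequality `d t ≤ ∑_τ |α(τ)| * d(τ)` (with the sum over
`(k+1)`-element subsets `τ` of `X`, each evaluated on any fixed ordering of `τ`)
is stated in the equivalent form `(k+1)! * d t ≤ ∑_s |α(s)| * d(s)` with the sum
over all `(k+1)`-tuples `s`: since `α` is alternating and `d` is permutation
invariant, the summand depends only on the underlying set of `s` (it vanishes on
tuples with repeated entries), and each `(k+1)`-element subset has exactly
`(k+1)!` orderings. -/
structure IsStrongPseudoMetric {X : Type*} [Fintype X] [DecidableEq X] (k : ℕ)
    (d : (Fin (k + 1) → X) → ℝ) : Prop where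
  nonneg : ∀ x, 0 ≤ d x
  eq_zero : ∀ x, ¬ Function.Injective x → d x = 0
  perm : ∀ (π : Equiv.Perm (Fin (k + 1))) (x), d (x ∘ π) = d x
  strong_simplex : ∀ t : Fin (k + 1) → X, Function.Injective t →
    ∀ α : (Fin (k + 1) → X) → ℝ, AltChain α → bdry α = bdry (unitChain t) →
      ((k + 1).factorial : ℝ) * d t ≤ ∑ s : Fin (k + 1) → X, |α s| * d s

/-- `(X, d)` is a coboundary metric of arity `k + 2` in `m` dimensions with respect
to the norm `ν` on `ℝ^m`: there are chains `f 1, …, f m` on `(k+1)`-tuples (i.e.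
`(k+2)-2`-dimensional chains for arity `k+2`) whose simultaneous coboundary
realizes `d` on injective tuples, and `d` vanishes on non-injective tuples. -/
def IsCoboundaryMetric {X : Type*} (k m : ℕ) (ν : (Fin m → ℝ) → ℝ)
    (d : (Fin (k + 2) → X) → ℝ) : Prop :=
  ∃ f : Fin m → ((Fin (k + 1) → X) → ℝ),
    (∀ i, AltChain (f i)) ∧
    (∀ x, Function.Injective x → d x = ν (fun i => cobdry (f i) x)) ∧
    (∀ x, ¬ Function.Injective x → d x = 0)

/-- `ν` is a norm on `ℝ^m`. -/
structure IsNorm {m : ℕ} (ν : (Fin m → ℝ) → ℝ) : Prop where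
  nonneg : ∀ x, 0 ≤ ν x
  eq_zero_iff : ∀ x, ν x = 0 ↔ x = 0
  homog : ∀ (c : ℝ) (x), ν (c • x) = |c| * ν x
  triangle : ∀ x y, ν (x + y) ≤ ν x + ν y

/-- The `ℓ_p` norm on `ℝ^m` for real `p`. -/
noncomputable def lpNorm (p : ℝ) {m : ℕ} (x : Fin m → ℝ) : ℝ :=
  (∑ i, |x i| ^ p) ^ (1 / p)

/-- The `ℓ_1` norm on `ℝ^m`. -/
noncomputable def l1Norm {m : ℕ} (x : Fin m → ℝ) : ℝ := ∑ i, |x i|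

/-- The `ℓ_2` (Euclidean) norm on `ℝ^m`. -/
noncomputable def l2Norm {m : ℕ} (x : Fin m → ℝ) : ℝ := Real.sqrt (∑ i, x i ^ 2)

/-- The `ℓ_∞` norm on `ℝ^m` (the sup norm, which is the norm of `Fin m → ℝ`). -/
noncomputable def linfNorm {m : ℕ} (x : Fin m → ℝ) : ℝ := ‖x‖

/- The apex extension of `d` (of arity `K`), with the apex being
`none : Option X` (a new element not in `X`): on an injective `(K+1)`-tuple
containing the apex in position `i` it is `d` of the tuple with position `i`
removed, and it is `0` on all other tuples. -/
open Classical in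
noncomputable def apexExt {X : Type*} {K : ℕ} (d : (Fin K → X) → ℝ) :
    (Fin (K + 1) → Option X) → ℝ := fun x =>
  if h : Function.Injective x ∧ ∃ i, x i = none then
    d (fun j =>
      Option.get (x ((Classical.choose h.2).succAbove j))
        (by
          rw [Option.isSome_iff_ne_none]
          intro hnone
          exact Fin.succAbove_ne (Classical.choose h.2) j
            (h.1 (hnone.trans (Classical.choose_spec h.2).symm))))
  else 0

/-- The `K`-dimensional volume of the simplex with vertices `y 0, …, y K` in `ℝ^m`:
`(1/K!) * √(det (AᵀA))` where `A` is the `m × K` matrix with columns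
`y i - y 0`, `i = 1, …, K`. -/
noncomputable def simplexVolume {m K : ℕ} (y : Fin (K + 1) → (Fin m → ℝ)) : ℝ :=
  (1 / (K.factorial : ℝ)) *
    Real.sqrt
      (Matrix.det
        (Matrix.of fun i j : Fin K =>
          ∑ l : Fin m, (y i.succ l - y 0 l) * (y j.succ l - y 0 l)))

namespace Stmt7Aux

open Equiv Finset

variable {X : Type*} [DecidableEq X]

lemma unitChain_eq_det {j : ℕ} (t s : Fin j → X) :
    unitChain t s =
      Matrix.det (Matrix.of fun i l : Fin j => if s i = t l then (1:ℝ) else 0) := by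
  rw [Matrix.det_apply']
  rw [unitChain]
  refine Fintype.sum_equiv (Equiv.inv (Equiv.Perm (Fin j))) _ _ ?_
  intro π
  have hcond : (s = t ∘ π) ↔ ∀ i, s (π⁻¹ i) = t i := by
    constructor
    · intro h i; rw [h]; simp
    · intro h; funext i
      have := h (π i); simpa using this
  simp only [Matrix.of_apply, Finset.prod_ite_eq, Equiv.inv_apply]
  rw [Finset.prod_boole]
  by_cases h : s = t ∘ π
  · rw [if_pos h, if_pos (by simpa using hcond.1 h)]
    simp [Matrix.detRowAlternating]
  · rw [if_neg h, if_neg (by intro hc; exact h (hcond.2 (by simpa using hc)))]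
    simp

end Stmt7Aux
namespace Stmt7Aux2
open Equiv Finset Stmt7Aux

variable {X : Type*} [DecidableEq X]

lemma altChain_unitChain {j : ℕ} (t : Fin j → X) : AltChain (unitChain t) := by
  intro π s
  rw [unitChain_eq_det, unitChain_eq_det]
  have : (Matrix.of fun i l : Fin j => if (s ∘ π) i = t l then (1:ℝ) else 0)
      = (Matrix.of fun i l : Fin j => if s i = t l then (1:ℝ) else 0).submatrix π id := rfl
  rw [this, Matrix.det_permute]

lemma unitChain_comp_perm {j : ℕ} (t : Fin j → X) (π : Equiv.Perm (Fin j)) :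
    unitChain (t ∘ π) = ((Equiv.Perm.sign π : ℤ) : ℝ) • unitChain t := by
  funext s
  rw [unitChain_eq_det, Pi.smul_apply, unitChain_eq_det]
  have : (Matrix.of fun i l : Fin j => if s i = (t ∘ π) l then (1:ℝ) else 0)
      = (Matrix.of fun i l : Fin j => if s i = t l then (1:ℝ) else 0).submatrix id π := rfl
  rw [this, Matrix.det_permute']
  norm_cast
  rw [zsmul_eq_mul]

end Stmt7Aux2
namespace Stmt7Aux3
open Equiv Finset Stmt7Aux

variable {X : Type*} [DecidableEq X] [Fintype X]

lemma bdry_unitChain {j : ℕ} (t : Fin (j + 1) → X) :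
    bdry (unitChain t) = fun y : Fin j → X =>
      ∑ i : Fin (j + 1), (-1 : ℝ) ^ (i : ℕ) * unitChain (t ∘ i.succAbove) y := by
  funext y
  rw [bdry]
  have step : ∀ x : X, unitChain t (Fin.cons x y) =
      ∑ i : Fin (j + 1), (-1 : ℝ) ^ (i : ℕ) * (if x = t i then (1:ℝ) else 0) *
        unitChain (t ∘ i.succAbove) y := by
    intro x
    rw [unitChain_eq_det, Matrix.det_succ_row_zero]
    refine Finset.sum_congr rfl fun i _ => ?_
    rw [unitChain_eq_det]
    have hm : (Matrix.of fun a l : Fin (j+1) =>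
          if (Fin.cons x y : Fin (j+1) → X) a = t l then (1:ℝ) else 0).submatrix Fin.succ i.succAbove
        = Matrix.of fun a b : Fin j => if y a = (t ∘ i.succAbove) b then (1:ℝ) else 0 := by
      funext a b
      simp [Matrix.submatrix_apply, Fin.cons_succ]
    rw [hm]
    simp [Fin.cons_zero]
  simp only [step]
  rw [Finset.sum_comm]
  refine Finset.sum_congr rfl fun i _ => ?_
  rw [← Finset.sum_mul, ← Finset.mul_sum]
  simp

lemma bdry_unitChain_ne_zero {j : ℕ} (t : Fin (j + 1) → X)
    (ht : Function.Injective t) : bdry (unitChain t) ≠ 0 := by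
  intro hzero
  have h1 : bdry (unitChain t) (t ∘ Fin.succ) = 1 := by
    rw [bdry]
    have hterm : ∀ x : X, unitChain t (Fin.cons x (t ∘ Fin.succ)) =
        if x = t 0 then 1 else 0 := by
      intro x
      by_cases hx : x = t 0
      · subst hx
        rw [if_pos rfl]
        have hcons : Fin.cons (t 0) (t ∘ Fin.succ) = t := by
          funext i
          refine Fin.cases ?_ ?_ i
          · simp
          · intro i; simp
        rw [hcons, unitChain_eq_det]
        have : (Matrix.of fun i l : Fin (j+1) => if t i = t l then (1:ℝ) else 0)
            = (1 : Matrix (Fin (j+1)) (Fin (j+1)) ℝ) := by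
          funext i l
          simp [Matrix.one_apply, ht.eq_iff]
        rw [this, Matrix.det_one]
      · rw [if_neg hx, unitChain]
        refine Finset.sum_eq_zero fun π _ => ?_
        rw [if_neg]
        intro hc
        have hfix : ∀ i : Fin j, π i.succ = i.succ := by
          intro i
          have := congrFun hc i.succ
          simp only [Fin.cons_succ, Function.comp_apply] at this
          exact (ht this).symm
        have hzero0 : π 0 = 0 := by
          rcases Fin.eq_zero_or_eq_succ (π 0) with h | ⟨i, h⟩
          · exact h
          · exfalso
            have : π 0 = π i.succ := by rw [hfix, h]
            have := π.injective this
            exact Fin.succ_ne_zero i this.symm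
        have := congrFun hc 0
        simp only [Fin.cons_zero, Function.comp_apply] at this
        rw [hzero0] at this
        exact hx this
    simp only [hterm]
    simp
  rw [hzero] at h1
  simp at h1

end Stmt7Aux3
namespace Stmt7Aux4
open Equiv Finset

variable {X : Type*} [DecidableEq X] [Fintype X]

lemma comp_inj {j : ℕ} {s : Fin j → X} (hs : Function.Injective s)
    {π π' : Equiv.Perm (Fin j)} (h : s ∘ π = s ∘ π') : π = π' := by
  exact Equiv.ext fun i => hs (congrFun h i)

lemma abs_sign {j : ℕ} (π : Equiv.Perm (Fin j)) :
    |((Equiv.Perm.sign π : ℤ) : ℝ)| = 1 := by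
  rcases Int.units_eq_one_or (Equiv.Perm.sign π) with h | h <;> simp [h]

lemma sum_abs_unitChain {j : ℕ} (d : (Fin j → X) → ℝ)
    (hperm : ∀ (π : Equiv.Perm (Fin j)) (x), d (x ∘ π) = d x)
    (s : Fin j → X) (hs : Function.Injective s) :
    ∑ u : Fin j → X, |unitChain s u| * d u = (j.factorial : ℝ) * d s := by
  have key : ∀ u : Fin j → X, |unitChain s u| * d u =
      ∑ π : Equiv.Perm (Fin j), if u = s ∘ π then d s else 0 := by
    intro u
    by_cases hex : ∃ π : Equiv.Perm (Fin j), u = s ∘ π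
    · obtain ⟨π₀, rfl⟩ := hex
      have h1 : unitChain s (s ∘ π₀) = ((Equiv.Perm.sign π₀ : ℤ) : ℝ) := by
        rw [unitChain]
        rw [Finset.sum_eq_single π₀]
        · rw [if_pos rfl]
        · intro π _ hne
          rw [if_neg]
          intro hc
          exact hne (comp_inj hs hc).symm
        · intro h; exact absurd (Finset.mem_univ π₀) h
      rw [h1, abs_sign, one_mul, hperm π₀ s]
      rw [Finset.sum_eq_single π₀]
      · rw [if_pos rfl]
      · intro π _ hne
        rw [if_neg]
        intro hc
        exact hne (comp_inj hs hc).symm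
      · intro h; exact absurd (Finset.mem_univ π₀) h
    · have h1 : unitChain s u = 0 := by
        rw [unitChain]
        refine Finset.sum_eq_zero fun π _ => ?_
        rw [if_neg (fun hc => hex ⟨π, hc⟩)]
      rw [h1]
      simp only [abs_zero, zero_mul]
      exact (Finset.sum_eq_zero fun π _ => if_neg (fun hc => hex ⟨π, hc⟩)).symm
  rw [Finset.sum_congr rfl fun u _ => key u, Finset.sum_comm]
  have : ∀ π : Equiv.Perm (Fin j),
      (∑ u : Fin j → X, if u = s ∘ π then d s else 0) = d s := by
    intro π
    simp [Finset.sum_ite_eq']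
  rw [Finset.sum_congr rfl fun π _ => this π]
  simp [Finset.sum_const, Fintype.card_perm, mul_comm]

end Stmt7Aux4
namespace Stmt7Main
open Equiv Finset Stmt7Aux Stmt7Aux2 Stmt7Aux3 Stmt7Aux4

/-- The boundary operator as a linear map. -/
noncomputable def bdryL (X : Type*) [Fintype X] (j : ℕ) :
    ((Fin (j + 1) → X) → ℝ) →ₗ[ℝ] ((Fin j → X) → ℝ) where
  toFun := bdry
  map_add' a b := by
    funext y
    simp [bdry, Finset.sum_add_distrib]
  map_smul' c a := by
    funext y
    simp [bdry, Finset.mul_sum]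

@[simp] lemma bdryL_apply {X : Type*} [Fintype X] {j : ℕ} (α : (Fin (j + 1) → X) → ℝ) :
    bdryL X j α = bdry α := rfl

/-- The submodule of alternating chains. -/
def altSub (X : Type*) (j : ℕ) : Submodule ℝ ((Fin j → X) → ℝ) where
  carrier := {α | AltChain α}
  add_mem' := by
    intro a b ha hb π x
    have h1 := ha π x
    have h2 := hb π x
    simp only [Pi.add_apply] at *
    rw [h1, h2]; ring
  zero_mem' := by
    intro π x; simp
  smul_mem' := by
    intro c a ha π x
    have h1 := ha π x
    simp only [Pi.smul_apply, smul_eq_mul] at *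
    rw [h1]; ring

@[simp] lemma mem_altSub {X : Type*} {j : ℕ} (α : (Fin j → X) → ℝ) :
    α ∈ altSub X j ↔ AltChain α := Iff.rfl

end Stmt7Main

open Stmt7Aux Stmt7Aux2 Stmt7Aux3 Stmt7Aux4 Stmt7Main

/-- for a strong pseudo metric `(X, d)` of arity `k + 2` and a tuple
`t`, there is a 1-dimensional coboundary metric `d'` (w.r.t. the absolute value,
i.e. `C_{k,∞}^1`) with `d' ≤ d` everywhere and `d' t = d t`. -/
theorem stmt_7 (k : ℕ) {X : Type*} [Fintype X] [DecidableEq X]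
    (d : (Fin (k + 2) → X) → ℝ) (hd : IsStrongPseudoMetric (k + 1) d)
    (t : Fin (k + 2) → X) :
    ∃ d' : (Fin (k + 2) → X) → ℝ,
      IsCoboundaryMetric k 1 (fun v => |v 0|) d' ∧
        (∀ y : Fin (k + 2) → X, d' y ≤ d y) ∧ d' t = d t := by
  classical
  by_cases hinj : Function.Injective t
  swap
  · refine ⟨fun _ => 0, ⟨fun _ => fun _ => 0, ?_, ?_, ?_⟩, fun y => hd.nonneg y,
      (hd.eq_zero t hinj).symm⟩
    · intro i π x; simp [AltChain]
    · intro x _; simp [cobdry]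
    · intro x _; rfl
  -- main case
  -- the sublinear functional p
  set fac : ℝ := ((k + 2).factorial : ℝ) with hfac
  have hfac_pos : 0 < fac := by positivity
  set p : ((Fin (k + 2) → X) → ℝ) → ℝ :=
    fun α => fac⁻¹ * ∑ s : Fin (k + 2) → X, |α s| * d s with hp
  have hp_nonneg : ∀ α, 0 ≤ p α := by
    intro α
    apply mul_nonneg (by positivity)
    exact Finset.sum_nonneg fun s _ => mul_nonneg (abs_nonneg _) (hd.nonneg s)
  have hp_hom : ∀ c : ℝ, 0 < c → ∀ α, p (c • α) = c * p α := by
    intro c hc α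
    simp only [hp, Pi.smul_apply, smul_eq_mul, abs_mul, abs_of_pos hc]
    rw [show (∑ s : Fin (k + 2) → X, c * |α s| * d s)
        = c * ∑ s : Fin (k + 2) → X, |α s| * d s by
      rw [Finset.mul_sum]; exact Finset.sum_congr rfl fun s _ => by ring]
    ring
  have hp_add : ∀ α β, p (α + β) ≤ p α + p β := by
    intro α β
    have h1 : (∑ s : Fin (k + 2) → X, |(α + β) s| * d s)
        ≤ (∑ s : Fin (k + 2) → X, |α s| * d s) + ∑ s : Fin (k + 2) → X, |β s| * d s := by
      rw [← Finset.sum_add_distrib]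
      refine Finset.sum_le_sum fun s _ => ?_
      rw [← add_mul]
      exact mul_le_mul_of_nonneg_right (abs_add_le _ _) (hd.nonneg s)
    calc p (α + β) ≤ fac⁻¹ * ((∑ s : Fin (k + 2) → X, |α s| * d s)
            + ∑ s : Fin (k + 2) → X, |β s| * d s) := by
          exact mul_le_mul_of_nonneg_left h1 (by positivity)
      _ = p α + p β := by rw [hp]; ring
  -- the subspace Z of alternating cycles
  set Z : Submodule ℝ ((Fin (k + 2) → X) → ℝ) :=
    altSub X (k + 2) ⊓ LinearMap.ker (bdryL X (k + 1)) with hZ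
  have h1t_notZ : unitChain t ∉ (⟨Z, 0⟩ : ((Fin (k + 2) → X) → ℝ) →ₗ.[ℝ] ℝ).domain := by
    intro hmem
    exact bdry_unitChain_ne_zero t hinj (LinearMap.mem_ker.1 hmem.2)
  set L : ((Fin (k + 2) → X) → ℝ) →ₗ.[ℝ] ℝ :=
    LinearPMap.supSpanSingleton ⟨Z, 0⟩ (unitChain t) (d t) h1t_notZ with hL
  have hLdom : L.domain = Z ⊔ (ℝ ∙ unitChain t) := rfl
  have happ : ∀ (z : (Fin (k + 2) → X) → ℝ) (hz : z ∈ Z) (c : ℝ)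
      (hm : z + c • unitChain t ∈ L.domain),
      L ⟨z + c • unitChain t, hm⟩ = c * d t := by
    intro z hz c hm
    have h2 := LinearPMap.supSpanSingleton_apply_mk (⟨Z, 0⟩ : _ →ₗ.[ℝ] ℝ)
      (unitChain t) (d t) h1t_notZ z hz c
    calc L ⟨z + c • unitChain t, hm⟩
        = (⟨Z, 0⟩ : _ →ₗ.[ℝ] ℝ) ⟨z, hz⟩ + c • d t := h2
      _ = c * d t := by
          simp [LinearPMap.mk_apply]
  -- key inequality on the domain of L
  have hf : ∀ x : L.domain, L x ≤ p x := by
    rintro ⟨x, hx⟩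
    rw [hLdom] at hx
    obtain ⟨z, hz, y, hy, hsum⟩ := Submodule.mem_sup.1 hx
    obtain ⟨c, rfl⟩ := Submodule.mem_span_singleton.1 hy
    have hx' : x = z + c • unitChain t := hsum.symm
    subst hx'
    rw [happ z hz c _]
    rcases le_or_gt c 0 with hc | hc
    · exact le_trans (mul_nonpos_of_nonpos_of_nonneg hc (hd.nonneg t)) (hp_nonneg _)
    · -- use the strong simplex inequality
      set α : (Fin (k + 2) → X) → ℝ := unitChain t + c⁻¹ • z with hα
      have hαalt : AltChain α := by
        have : α ∈ altSub X (k + 2) :=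
          Submodule.add_mem _ (altChain_unitChain t) (Submodule.smul_mem _ c⁻¹ hz.1)
        exact this
      have hbz : bdry z = 0 := LinearMap.mem_ker.1 hz.2
      have hbα : bdry α = bdry (unitChain t) := by
        funext y
        show ∑ x : X, α (Fin.cons x y) = _
        simp only [hα, Pi.add_apply, Pi.smul_apply, smul_eq_mul]
        rw [Finset.sum_add_distrib, ← Finset.mul_sum]
        have hz0 : ∑ x : X, z (Fin.cons x y) = 0 := by
          have := congrFun hbz y
          simpa [bdry] using this
        rw [hz0, mul_zero, add_zero]
        rfl
      have hss := hd.strong_simplex t hinj α hαalt hbα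
      have hpα : d t ≤ p α := by
        have h3 : fac⁻¹ * (fac * d t) ≤ fac⁻¹ * ∑ s : Fin (k + 2) → X, |α s| * d s :=
          mul_le_mul_of_nonneg_left hss (by positivity)
        rw [inv_mul_cancel_left₀ (ne_of_gt hfac_pos)] at h3
        exact h3
      have hcα : z + c • unitChain t = c • α := by
        rw [hα, smul_add, smul_smul, mul_inv_cancel₀ (ne_of_gt hc), one_smul]
        exact add_comm _ _
      show c * d t ≤ p (z + c • unitChain t)
      rw [hcα, hp_hom c hc α]
      exact mul_le_mul_of_nonneg_left hpα (le_of_lt hc)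
  obtain ⟨g, hg_eq, hg_le⟩ := exists_extension_of_le_sublinear L p hp_hom hp_add hf
  -- facts about g
  have hg1t : g (unitChain t) = d t := by
    have hmem : unitChain t ∈ L.domain := by
      rw [hLdom]
      exact Submodule.mem_sup_right (Submodule.mem_span_singleton_self _)
    have h2 : unitChain t = (0 : (Fin (k + 2) → X) → ℝ) + (1 : ℝ) • unitChain t := by simp
    have hmem' : (0 : (Fin (k + 2) → X) → ℝ) + (1 : ℝ) • unitChain t ∈ L.domain := h2 ▸ hmem
    have h3 : L ⟨unitChain t, hmem⟩ = L ⟨_, hmem'⟩ := by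
      congr 1
      exact Subtype.ext h2
    rw [hg_eq ⟨unitChain t, hmem⟩, h3, happ 0 (Submodule.zero_mem Z) 1 hmem', one_mul]
  have hgZ : ∀ z ∈ Z, g z = 0 := by
    intro z hz
    have hmem : z ∈ L.domain := by rw [hLdom]; exact Submodule.mem_sup_left hz
    have h2 : z = z + (0 : ℝ) • unitChain t := by simp
    have hmem' : z + (0 : ℝ) • unitChain t ∈ L.domain := h2 ▸ hmem
    have h3 : L ⟨z, hmem⟩ = L ⟨_, hmem'⟩ := by
      congr 1; exact Subtype.ext h2
    rw [hg_eq ⟨z, hmem⟩, h3, happ z hz 0 hmem', zero_mul]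
  have hp_even : ∀ α, p (-α) = p α := by
    intro α
    simp only [hp, Pi.neg_apply, abs_neg]
  have hg_abs : ∀ α, |g α| ≤ p α := by
    intro α
    rw [abs_le]
    refine ⟨?_, hg_le α⟩
    have h1 := hg_le (-α)
    rw [map_neg, hp_even] at h1
    linarith
  -- factor g through the boundary on alternating chains
  set A : Submodule ℝ ((Fin (k + 2) → X) → ℝ) := altSub X (k + 2) with hA
  set u : A →ₗ[ℝ] ((Fin (k + 1) → X) → ℝ) := (bdryL X (k + 1)).comp A.subtype with hu
  set v : A →ₗ[ℝ] ℝ := g.comp A.subtype with hv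
  have hker : LinearMap.ker u ≤ LinearMap.ker v := by
    intro a ha
    have h1 : (a : (Fin (k + 2) → X) → ℝ) ∈ Z :=
      Submodule.mem_inf.2 ⟨a.2, LinearMap.mem_ker.2 (LinearMap.mem_ker.1 ha)⟩
    exact LinearMap.mem_ker.2 (hgZ a h1)
  set e := u.quotKerEquivRange with he
  set w : LinearMap.range u →ₗ[ℝ] ℝ :=
    (Submodule.liftQ (LinearMap.ker u) v hker).comp e.symm.toLinearMap with hw
  obtain ⟨h, hh⟩ := LinearMap.exists_extend w
  have hhu : ∀ a : A, h (u a) = g a := by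
    intro a
    have hmem : u a ∈ LinearMap.range u := LinearMap.mem_range_self u a
    have h1 := LinearMap.congr_fun hh ⟨u a, hmem⟩
    simp only [LinearMap.comp_apply, Submodule.coe_subtype] at h1
    rw [h1, hw]
    have h2 : e.symm ⟨u a, hmem⟩ = Submodule.Quotient.mk a := by
      apply e.injective
      rw [LinearEquiv.apply_symm_apply]
      exact Subtype.ext (u.quotKerEquivRange_apply_mk a).symm
    simp only [LinearMap.comp_apply, LinearEquiv.coe_coe, h2, Submodule.liftQ_apply]
    rfl
  -- the 1-dimensional chain
  set F : (Fin (k + 1) → X) → ℝ := fun y => h (unitChain y) with hF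
  have hFalt : AltChain F := by
    intro π y
    show h (unitChain (y ∘ π)) = _
    rw [unitChain_comp_perm, map_smul]
    simp [hF, smul_eq_mul]
  have hkey : ∀ s : Fin (k + 2) → X, cobdry F s = g (unitChain s) := by
    intro s
    have h1 : bdry (unitChain s)
        = ∑ i : Fin (k + 2), ((-1 : ℝ) ^ (i : ℕ)) • unitChain (s ∘ i.succAbove) := by
      rw [bdry_unitChain]
      funext y
      rw [Finset.sum_apply]
      simp [Pi.smul_apply, smul_eq_mul]
    have h2 : h (bdry (unitChain s)) = cobdry F s := by
      rw [h1, map_sum, cobdry]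
      refine Finset.sum_congr rfl fun i _ => ?_
      rw [map_smul]
      simp [hF, smul_eq_mul]
    have h3 : bdry (unitChain s) = u ⟨unitChain s, altChain_unitChain s⟩ := rfl
    rw [← h2, h3, hhu]
  -- the value of p on unit chains
  have hp1 : ∀ s : Fin (k + 2) → X, Function.Injective s → p (unitChain s) = d s := by
    intro s hs
    show fac⁻¹ * ∑ u : Fin (k + 2) → X, |unitChain s u| * d u = d s
    rw [Stmt7Aux4.sum_abs_unitChain d hd.perm s hs, ← hfac,
      inv_mul_cancel_left₀ (ne_of_gt hfac_pos)]
  -- assemble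
  refine ⟨fun x => if Function.Injective x then |g (unitChain x)| else 0,
    ⟨fun _ => F, fun _ => hFalt, ?_, ?_⟩, ?_, ?_⟩
  · intro x hx
    show (if Function.Injective x then |g (unitChain x)| else 0) = |cobdry F x|
    rw [if_pos hx, hkey x]
  · intro x hx
    show (if Function.Injective x then |g (unitChain x)| else 0) = 0
    rw [if_neg hx]
  · intro y
    show (if Function.Injective y then |g (unitChain y)| else 0) ≤ d y
    by_cases hy : Function.Injective y
    · rw [if_pos hy]
      calc |g (unitChain y)| ≤ p (unitChain y) := hg_abs _
        _ = d y := hp1 y hy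
    · rw [if_neg hy]
      exact hd.nonneg y
  · show (if Function.Injective t then |g (unitChain t)| else 0) = d t
    rw [if_pos hinj, hg1t]
    exact abs_of_nonneg (hd.nonneg t)
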